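/- Let G be an n-player co-Büchi game on a possibly infinite arena, where player i's objective is coBüchi(T_i) for a set T_i ⊆ V, and let σ' be a Nash equilibrium from a vertex v_0. Then there exists a Nash equilibrium σ from v_0 in which every strategy is finite-memory and such that Sat(out(σ', v_0)) ⊆ Sat(out(σ, v_0)). Moreover, if the arena is finite, the strategies of σ can be taken with memory size at most |V| + 2n. -/

import Mathlib

open scoped ENNReal Classical

/-- An `n`-player arena on a (possibly infinite) directed graph: an edge relation
with no deadlocks, together with an assignment of each vertex to its owner. -/
structure Arena (V : Type) (n : ℕ) where
  E : V → V → Prop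
  owner : V → Fin n
  no_deadlock : ∀ v, ∃ v', E v v'

namespace Arena

variable {V : Type} {n : ℕ}

/-- A play: an infinite sequence of vertices following edges. -/
def IsPlay (A : Arena V n) (π : ℕ → V) : Prop := ∀ j, A.E (π j) (π (j + 1))

/-- A strategy: given the past history (the earlier vertices, oldest first) and the
current vertex, pick an `E`-successor of the current vertex. -/
structure Strategy (A : Arena V n) where
  next : List V → V → V
  valid : ∀ h v, A.E v (next h v)

/-- The list of the first `j` vertices of a play. -/
def pref (π : ℕ → V) (j : ℕ) : List V := (List.range j).map π

/-- A play is consistent with the strategy `σ` used by player `i`. -/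
def Consistent (A : Arena V n) (i : Fin n) (σ : A.Strategy) (π : ℕ → V) : Prop :=
  ∀ j, A.owner (π j) = i → π (j + 1) = σ.next (pref π j) (π j)

/-- A memoryless strategy only depends on the current vertex. -/
def Memoryless {A : Arena V n} (σ : A.Strategy) : Prop :=
  ∀ h h' v, σ.next h v = σ.next h' v

def outcomeAux (A : Arena V n) (σ : Fin n → A.Strategy) (v0 : V) : ℕ → List V × V
  | 0 => ([], v0)
  | j + 1 =>
      let p := outcomeAux A σ v0 j
      (p.1 ++ [p.2], (σ (A.owner p.2)).next p.1 p.2)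

/-- The outcome of the strategy profile `σ` from `v0`: the unique play from `v0`
consistent with every strategy of the profile. -/
def outcome (A : Arena V n) (σ : Fin n → A.Strategy) (v0 : V) (j : ℕ) : V :=
  (outcomeAux A σ v0 j).2

/-- Reachability objective: visit `T`. -/
def ReachObj (T : Set V) : Set (ℕ → V) := {π | ∃ j, π j ∈ T}

/-- Safety objective: never visit `T`. -/
def SafeObj (T : Set V) : Set (ℕ → V) := {π | ∀ j, π j ∉ T}

/-- Büchi objective: visit `T` infinitely often. -/
def BuchiObj (T : Set V) : Set (ℕ → V) := {π | ∀ j, ∃ k, j ≤ k ∧ π k ∈ T}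

/-- co-Büchi objective: visit `T` only finitely often. -/
def CoBuchiObj (T : Set V) : Set (ℕ → V) := {π | ∃ j, ∀ k, j ≤ k → π k ∉ T}

/-- Shortest-path cost of a play: the total weight up to the first visit of `T`,
and `⊤` if `T` is never visited. -/
noncomputable def spCost (w : V → V → ℕ) (T : Set V) (π : ℕ → V) : ℝ≥0∞ :=
  if ∃ k, π k ∈ T then
    (Finset.range (sInf {k | π k ∈ T})).sum fun j => (w (π j) (π (j + 1)) : ℝ≥0∞)
  else ⊤

/-- Winning region of player `p` (whose objective is `Ω`) in a two-player game:
vertices from which `p` has a strategy all of whose consistent plays lie in `Ω`. -/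
def WinRegion (A : Arena V 2) (p : Fin 2) (Ω : Set (ℕ → V)) : Set V :=
  {v | ∃ σ : A.Strategy, ∀ π, A.IsPlay π → π 0 = v → A.Consistent p σ π → π ∈ Ω}

/-- Lower value `inf_{σ₁} sup_{σ₂}` of a two-player zero-sum game with cost `c`
(minimised by player 1, maximised by player 2). -/
noncomputable def valIS (A : Arena V 2) (c : (ℕ → V) → ℝ≥0∞) (v : V) : ℝ≥0∞ :=
  ⨅ σ1 : A.Strategy, ⨆ σ2 : A.Strategy, c (outcome A ![σ1, σ2] v)

/-- Upper value `sup_{σ₂} inf_{σ₁}`. -/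
noncomputable def valSI (A : Arena V 2) (c : (ℕ → V) → ℝ≥0∞) (v : V) : ℝ≥0∞ :=
  ⨆ σ2 : A.Strategy, ⨅ σ1 : A.Strategy, c (outcome A ![σ1, σ2] v)

/-- Nash equilibrium from `v0` for cost functions (each player minimises):
no unilateral deviation decreases the deviator's cost. -/
def IsNECost (A : Arena V n) (cost : Fin n → (ℕ → V) → ℝ≥0∞)
    (σ : Fin n → A.Strategy) (v0 : V) : Prop :=
  ∀ (i : Fin n) (τ : A.Strategy),
    cost i (outcome A σ v0) ≤ cost i (outcome A (Function.update σ i τ) v0)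

/-- Nash equilibrium from `v0` for objectives: if a unilateral deviation of player `i`
satisfies `Ω i`, then so does the equilibrium outcome. -/
def IsNEObj (A : Arena V n) (Ω : Fin n → Set (ℕ → V))
    (σ : Fin n → A.Strategy) (v0 : V) : Prop :=
  ∀ (i : Fin n) (τ : A.Strategy),
    outcome A (Function.update σ i τ) v0 ∈ Ω i → outcome A σ v0 ∈ Ω i

/-- The coalition arena of player `i`: player `i` (as player `0`) against all others. -/
def coalition (A : Arena V n) (i : Fin n) : Arena V 2 where
  E := A.E
  owner := fun v => if A.owner v = i then 0 else 1
  no_deadlock := A.no_deadlock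

/-- Winning region of player `i` in their coalition game for objective `Ω`. -/
def coalWin (A : Arena V n) (i : Fin n) (Ω : Set (ℕ → V)) : Set V :=
  WinRegion (coalition A i) 0 Ω

/-- Value of a vertex in player `i`'s coalition game with cost `c`. -/
noncomputable def coalVal (A : Arena V n) (i : Fin n) (c : (ℕ → V) → ℝ≥0∞) (v : V) :
    ℝ≥0∞ :=
  valIS (coalition A i) c v

/-- Players whose reachability objective is satisfied by `π`. -/
def satReach (T : Fin n → Set V) (π : ℕ → V) : Set (Fin n) := {i | ∃ j, π j ∈ T i}

/-- Players whose safety objective is satisfied by `π`. -/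
def satSafe (T : Fin n → Set V) (π : ℕ → V) : Set (Fin n) := {i | ∀ j, π j ∉ T i}

/-- Players whose Büchi objective is satisfied by `π`. -/
def satBuchi (T : Fin n → Set V) (π : ℕ → V) : Set (Fin n) :=
  {i | ∀ j, ∃ k, j ≤ k ∧ π k ∈ T i}

/-- Players whose co-Büchi objective is satisfied by `π`. -/
def satCoBuchi (T : Fin n → Set V) (π : ℕ → V) : Set (Fin n) :=
  {i | ∃ j, ∀ k, j ≤ k → π k ∉ T i}

/-- Earliest positions at which the targets visited by `π` are first visited. -/
def visitSet (T : Fin n → Set V) (π : ℕ → V) : Set ℕ :=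
  {m | ∃ i, (∃ j, π j ∈ T i) ∧ m = sInf {j | π j ∈ T i}}

/-- A Mealy machine with memory states `M`. -/
structure Mealy (A : Arena V n) (M : Type) where
  init : M
  up : M → V → M
  nxt : M → V → V
  valid : ∀ m v, A.E v (nxt m v)

/-- The strategy `σ` is induced by the Mealy machine `mm`. -/
def InducedBy {A : Arena V n} {M : Type} (σ : A.Strategy) (mm : Mealy A M) : Prop :=
  ∀ h v, σ.next h v = mm.nxt (h.foldl mm.up mm.init) v

/-- `σ` has memory size at most `b`. -/
def HasMemorySize {A : Arena V n} (σ : A.Strategy) (b : ℕ) : Prop :=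
  ∃ (M : Type) (mm : Mealy A M), Finite M ∧ Nat.card M ≤ b ∧ InducedBy σ mm

/-- `σ` is a finite-memory strategy. -/
def FiniteMemory {A : Arena V n} (σ : A.Strategy) : Prop :=
  ∃ (M : Type) (mm : Mealy A M), Finite M ∧ InducedBy σ mm

/-- The (finite) segment of `π` between positions `a` and `b` is a simple history. -/
def SimpleSeg (π : ℕ → V) (a b : ℕ) : Prop :=
  ∀ m m', a ≤ m → m ≤ b → a ≤ m' → m' ≤ b → π m = π m' → m = m'

/-- The suffix of `π` from position `a` is a simple play. -/
def SimplePlaySeg (π : ℕ → V) (a : ℕ) : Prop :=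
  ∀ m m', a ≤ m → a ≤ m' → π m = π m' → m = m'

/-- The suffix of `π` from position `a` is a simple lasso `p c^ω` with `p c`
a simple history. -/
def SimpleLassoSeg (π : ℕ → V) (a : ℕ) : Prop :=
  ∃ k ℓ, 0 < ℓ ∧ (∀ m, a + k ≤ m → π (m + ℓ) = π m) ∧
    ∀ m m', a ≤ m → m < a + k + ℓ → a ≤ m' → m' < a + k + ℓ → π m = π m' → m = m'

/-- The segment of `π` between positions `a` and `b` is a simple cycle. -/
def SimpleCycleSeg (π : ℕ → V) (a b : ℕ) : Prop :=
  a < b ∧ π b = π a ∧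
    ∀ m m', a ≤ m → m < b → a ≤ m' → m' < b → π m = π m' → m = m'

/-- Total weight of a history (a list of vertices). -/
def histWeight (w : V → V → ℕ) : List V → ℕ
  | [] => 0
  | [_] => 0
  | a :: b :: t => w a b + histWeight w (b :: t)

/-- The list of vertices along positions `a..b` (inclusive) of a play. -/
def segList (π : ℕ → V) (a b : ℕ) : List V :=
  (List.range (b - a + 1)).map fun m => π (a + m)

/-- The segment of `π` between positions `a` and `b` has minimal weight among all
histories that share its first and last vertex and traverse only its vertices. -/
def MinWeightSeg (A : Arena V n) (w : V → V → ℕ) (π : ℕ → V) (a b : ℕ) : Prop :=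
  ∀ h : List V, h ≠ [] → List.Chain' A.E h →
    h.head? = some (π a) → h.getLast? = some (π b) →
    (∀ x ∈ h, ∃ m, a ≤ m ∧ m ≤ b ∧ π m = x) →
    histWeight w (segList π a b) ≤ histWeight w h

/-- Given cut positions `p`, segments number `l` and `l'` of `π` carry the same
vertex sequence. -/
def SegEq (π : ℕ → V) (p : ℕ → ℕ) (l l' : ℕ) : Prop :=
  p (l' + 1) - p l' = p (l + 1) - p l ∧
    ∀ m, m ≤ p (l + 1) - p l → π (p l' + m) = π (p l + m)

/-- There is no cycle of the arena using only vertices of `S` and avoiding `avoid`. -/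
def NoCycleAvoid (A : Arena V n) (S : Set V) (avoid : V) : Prop :=
  ¬ ∃ (m : ℕ) (c : ℕ → V), 0 < m ∧ (∀ j, j < m → A.E (c j) (c (j + 1))) ∧
      c m = c 0 ∧ ∀ j, j ≤ m → c j ∈ S ∧ c j ≠ avoid

end Arena

open Arena

namespace Arena

variable {V : Type} {n : ℕ}

noncomputable def dflt (A : Arena V n) (v : V) : V := Classical.choose (A.no_deadlock v)

lemma dflt_edge (A : Arena V n) (v : V) : A.E v (A.dflt v) :=
  Classical.choose_spec (A.no_deadlock v)

/-- shift of a play by `k`: `shift π k m = π (m + k)` -/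
def shift (π : ℕ → V) (k : ℕ) : ℕ → V := fun m => π (m + k)

@[simp] lemma shift_apply (π : ℕ → V) (k m : ℕ) : shift π k m = π (m + k) := rfl

lemma isPlay_shift {A : Arena V n} {π : ℕ → V} (h : A.IsPlay π) (k : ℕ) :
    A.IsPlay (shift π k) := by
  intro j
  have := h (j + k)
  simpa [shift, Nat.add_right_comm] using this

@[simp] lemma pref_zero (π : ℕ → V) : pref π 0 = [] := rfl

lemma pref_succ (π : ℕ → V) (j : ℕ) : pref π (j + 1) = pref π j ++ [π j] := by
  simp [pref, List.range_succ]

@[simp] lemma pref_length (π : ℕ → V) (j : ℕ) : (pref π j).length = j := by simp [pref]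

lemma pref_get? (π : ℕ → V) {q j : ℕ} (h : q < j) : (pref π j)[q]? = some (π q) := by
  simp [pref, List.getElem?_map, List.getElem?_range h]

lemma pref_getD (π : ℕ → V) {q j : ℕ} (h : q < j) (w : V) :
    (pref π j).getD q w = π q := by
  rw [List.getD_eq_getElem?_getD, pref_get? π h]
  rfl

lemma pref_congr {π π' : ℕ → V} {j : ℕ} (h : ∀ m < j, π m = π' m) :
    pref π j = pref π' j := by
  simp only [pref]
  apply List.map_congr_left
  intro a ha
  exact h a (List.mem_range.mp ha)

lemma pref_succ_cons (π : ℕ → V) (j : ℕ) :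
    pref π (j + 1) = π 0 :: pref (shift π 1) j := by
  simp only [pref, List.range_succ_eq_map, List.map_cons, List.map_map]
  rfl

lemma pref_drop (π : ℕ → V) (k m : ℕ) : (pref π (m + k)).drop k = pref (shift π k) m := by
  apply List.ext_getElem?
  intro q
  rcases lt_or_ge q m with hq | hq
  · rw [List.getElem?_drop, pref_get? π (by omega), pref_get? (shift π k) hq]
    simp [shift, Nat.add_comm]
  · have h1 : ((pref π (m + k)).drop k).length = m := by simp
    rw [List.getElem?_eq_none (by omega), List.getElem?_eq_none (by simp; omega)]

lemma pref_mem {π : ℕ → V} {j : ℕ} {x : V} (h : x ∈ pref π j) : ∃ q < j, π q = x := by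
  simp only [pref, List.mem_map, List.mem_range] at h
  obtain ⟨q, hq, rfl⟩ := h
  exact ⟨q, hq, rfl⟩

lemma chain'_pref {A : Arena V n} {π : ℕ → V} (h : A.IsPlay π) (j : ℕ) :
    List.Chain' A.E (pref π j) := by
  induction j with
  | zero => exact List.isChain_nil
  | succ m ih =>
      rw [pref_succ]
      rcases Nat.eq_zero_or_pos m with rfl | hm
      · exact List.isChain_singleton _
      · refine List.isChain_append.mpr ?_
        refine ⟨ih, List.isChain_singleton _, ?_⟩
        intro x hx y hy
        have hxl : (pref π m).getLast? = some (π (m - 1)) := by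
          rw [List.getLast?_eq_getElem? ]
          simp only [pref_length]
          exact pref_get? π (by omega)
        rw [hxl] at hx
        simp only [List.head?_cons, Option.mem_def, Option.some.injEq] at hx hy
        subst hx; subst hy
        have := h (m - 1)
        have hm1 : m - 1 + 1 = m := by omega
        rwa [hm1] at this

-- outcome lemmas
lemma outcome_zero (A : Arena V n) (σ : Fin n → A.Strategy) (v0 : V) :
    outcome A σ v0 0 = v0 := rfl

lemma outcomeAux_fst (A : Arena V n) (σ : Fin n → A.Strategy) (v0 : V) (j : ℕ) :
    (outcomeAux A σ v0 j).1 = pref (outcome A σ v0) j := by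
  induction j with
  | zero => rfl
  | succ m ih =>
      show (outcomeAux A σ v0 m).1 ++ [(outcomeAux A σ v0 m).2] = _
      rw [ih, pref_succ]
      rfl

lemma outcome_succ (A : Arena V n) (σ : Fin n → A.Strategy) (v0 : V) (j : ℕ) :
    outcome A σ v0 (j + 1) =
      (σ (A.owner (outcome A σ v0 j))).next (pref (outcome A σ v0) j) (outcome A σ v0 j) := by
  show (outcomeAux A σ v0 (j+1)).2 = _
  rw [show (outcomeAux A σ v0 (j+1)).2 =
    (σ (A.owner (outcomeAux A σ v0 j).2)).next (outcomeAux A σ v0 j).1 (outcomeAux A σ v0 j).2 from rfl]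
  rw [outcomeAux_fst]
  rfl

lemma outcome_isPlay (A : Arena V n) (σ : Fin n → A.Strategy) (v0 : V) :
    A.IsPlay (outcome A σ v0) := by
  intro j
  rw [outcome_succ]
  exact (σ _).valid _ _

lemma outcome_eq (A : Arena V n) (σ : Fin n → A.Strategy) (v0 : V) (π : ℕ → V)
    (h0 : π 0 = v0)
    (hstep : ∀ j, π (j + 1) = (σ (A.owner (π j))).next (pref π j) (π j)) :
    ∀ m, outcome A σ v0 m = π m := by
  intro m
  induction m using Nat.strong_induction_on with
  | _ m ih =>
    match m with
    | 0 => rw [outcome_zero, h0]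
    | j + 1 =>
      rw [outcome_succ, hstep j]
      have hpref : pref (outcome A σ v0) j = pref π j :=
        pref_congr fun q hq => ih q (by omega)
      rw [hpref, ih j (by omega)]

-- CoBuchi lemmas
lemma coBuchi_shift_iff {T : Set V} (π : ℕ → V) (k : ℕ) :
    shift π k ∈ CoBuchiObj T ↔ π ∈ CoBuchiObj T := by
  constructor
  · rintro ⟨j, hj⟩
    refine ⟨j + k, fun m hm => ?_⟩
    have := hj (m - k) (by omega)
    simpa [shift, Nat.sub_add_cancel (by omega : k ≤ m)] using this
  · rintro ⟨j, hj⟩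
    exact ⟨j, fun m hm => hj (m + k) (by omega)⟩

lemma not_coBuchi_of_io {T : Set V} {π : ℕ → V} (h : ∀ M, ∃ m, M ≤ m ∧ π m ∈ T) :
    π ∉ CoBuchiObj T := by
  rintro ⟨j, hj⟩
  obtain ⟨m, hm, hmT⟩ := h j
  exact hj m hm hmT

end Arena
namespace Arena

variable {V : Type} {n : ℕ}

/-- Winning region of player `i` for the coBüchi objective `T` in the coalition game
(formulated directly in the n-player arena). -/
def Ci (A : Arena V n) (T : Set V) (i : Fin n) : Set V :=
  {v | ∃ σ : A.Strategy, ∀ π, A.IsPlay π → π 0 = v → A.Consistent i σ π → π ∈ CoBuchiObj T}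

noncomputable def winStrat (A : Arena V n) (T : Set V) (i : Fin n) (w : V) : A.Strategy :=
  if hw : w ∈ Ci A T i then Classical.choose hw
  else ⟨fun _ u => A.dflt u, fun _ u => A.dflt_edge u⟩

lemma winStrat_spec {A : Arena V n} {T : Set V} {i : Fin n} {w : V} (hw : w ∈ Ci A T i) :
    ∀ π, A.IsPlay π → π 0 = w → A.Consistent i (winStrat A T i w) π → π ∈ CoBuchiObj T := by
  unfold winStrat
  rw [dif_pos hw]
  exact Classical.choose_spec hw

lemma ci_step_i {A : Arena V n} {T : Set V} {i : Fin n} {v w : V}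
    (hv : A.owner v = i) (hE : A.E v w) (hw : w ∈ Ci A T i) : v ∈ Ci A T i := by
  obtain ⟨σw, hσw⟩ := hw
  refine ⟨⟨fun h u => if h.length = 0 then (if u = v then w else A.dflt u)
      else σw.next h.tail u, ?_⟩, ?_⟩
  · intro h u
    split_ifs with h1 h2
    · subst h2; exact hE
    · exact A.dflt_edge u
    · exact σw.valid _ _
  · intro π hπ h0 hcons
    have h1 : π 1 = w := by
      have h2 := hcons 0 (by rw [h0]; exact hv)
      rw [h2]
      simp [h0]
    rw [← coBuchi_shift_iff π 1]
    refine hσw (shift π 1) (isPlay_shift hπ 1) (by simpa [shift] using h1) ?_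
    intro j hj
    have hc := hcons (j + 1) (by simpa [shift, Nat.add_comm] using hj)
    rw [pref_succ_cons] at hc
    show π (j + 1 + 1) = _
    have : j + 1 + 1 = (j + 1) + 1 := rfl
    rw [show j + 1 + 1 = j + 1 + 1 from rfl]
    have hc' : π (j + 1 + 1) = π (j + 1 + 1) := rfl
    calc π (j + 1 + 1) = _ := hc
    _ = σw.next (pref (shift π 1) j) (π (j + 1)) := by
        simp only [List.length_cons, List.tail_cons]
        rw [if_neg (by omega)]
    _ = _ := rfl

lemma ci_step_c {A : Arena V n} {T : Set V} {i : Fin n} {v : V}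
    (hv : A.owner v ≠ i) (h : ∀ w, A.E v w → w ∈ Ci A T i) : v ∈ Ci A T i := by
  refine ⟨⟨fun h u => match h with
    | [] => A.dflt u
    | [_] => (winStrat A T i u).next [] u
    | _ :: w :: t => (winStrat A T i w).next (w :: t) u, ?_⟩, ?_⟩
  · intro h u
    match h with
    | [] => exact A.dflt_edge u
    | [_] => exact (winStrat A T i u).valid [] u
    | _ :: w :: t => exact (winStrat A T i w).valid (w :: t) u
  · intro π hπ h0 hcons
    have hw : π 1 ∈ Ci A T i := h (π 1) (by have := hπ 0; rwa [h0] at this)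
    rw [← coBuchi_shift_iff π 1]
    refine winStrat_spec hw (shift π 1) (isPlay_shift hπ 1) rfl ?_
    intro j hj
    have hc := hcons (j + 1) (by simpa [shift, Nat.add_comm] using hj)
    rw [pref_succ_cons] at hc
    show π (j + 1 + 1) = _
    rw [hc]
    cases j with
    | zero =>
        simp only [pref_zero]
        rfl
    | succ m =>
        rw [pref_succ_cons (shift π 1) m]
        rfl

section Attractor

variable (A : Arena V n) (T : Set V) (i : Fin n)

def Dreg : Set V := {v | v ∉ Ci A T i}

def Rreg : Set V := {v | v ∈ T ∧ v ∉ Ci A T i}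

def Amap (X : Set V) : Set V :=
  Rreg A T i ∪ {v | v ∈ Dreg A T i ∧
    ((A.owner v = i ∧ ∀ w, A.E v w → w ∈ X) ∨ (A.owner v ≠ i ∧ ∃ w, A.E v w ∧ w ∈ X))}

lemma Amap_mono {X Y : Set V} (h : X ⊆ Y) : Amap A T i X ⊆ Amap A T i Y := by
  intro v hv
  rcases hv with hv | ⟨hD, hc⟩
  · exact Or.inl hv
  · refine Or.inr ⟨hD, ?_⟩
    rcases hc with ⟨ho, hall⟩ | ⟨ho, w, hw, hwX⟩
    · exact Or.inl ⟨ho, fun w hw => h (hall w hw)⟩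
    · exact Or.inr ⟨ho, w, hw, h hwX⟩

noncomputable def Qfun : Ordinal.{0} → Set V
  | α => Amap A T i (⋃ β : {β : Ordinal.{0} // β < α}, Qfun β.1)
termination_by α => α
decreasing_by exact β.2

def Qtot : Set V := ⋃ α : Ordinal.{0}, Qfun A T i α

lemma Qfun_eq (α : Ordinal.{0}) :
    Qfun A T i α = Amap A T i (⋃ β : {β : Ordinal.{0} // β < α}, Qfun A T i β.1) := by
  rw [Qfun]

noncomputable def rk (v : V) : Ordinal.{0} :=
  if h : {α : Ordinal.{0} | v ∈ Qfun A T i α}.Nonempty then Ordinal.lt_wf.min _ h else 0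

lemma rk_mem {v : V} (h : v ∈ Qtot A T i) : v ∈ Qfun A T i (rk A T i v) := by
  obtain ⟨S, ⟨α, rfl⟩, hm⟩ := h
  have hne : {α : Ordinal.{0} | v ∈ Qfun A T i α}.Nonempty := ⟨α, hm⟩
  unfold rk
  rw [dif_pos hne]
  exact Ordinal.lt_wf.min_mem _ hne

lemma rk_le {v : V} {α : Ordinal.{0}} (h : v ∈ Qfun A T i α) : rk A T i v ≤ α := by
  have hne : {α : Ordinal.{0} | v ∈ Qfun A T i α}.Nonempty := ⟨α, h⟩
  unfold rk
  rw [dif_pos hne]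
  exact not_lt.mp (Ordinal.lt_wf.not_lt_min _ h)

lemma Qfun_subset_D (α : Ordinal.{0}) : Qfun A T i α ⊆ Dreg A T i := by
  rw [Qfun_eq]
  rintro v (hv | ⟨hD, _⟩)
  · exact hv.2
  · exact hD

lemma Qtot_subset_D : Qtot A T i ⊆ Dreg A T i := by
  rintro v ⟨S, ⟨α, rfl⟩, hm⟩
  exact Qfun_subset_D A T i α hm

lemma Qfun_subset_Qtot (α : Ordinal.{0}) : Qfun A T i α ⊆ Qtot A T i :=
  Set.subset_iUnion (fun α => Qfun A T i α) α

lemma Rreg_subset_Qfun (α : Ordinal.{0}) : Rreg A T i ⊆ Qfun A T i α := by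
  rw [Qfun_eq]
  exact Set.subset_union_left

lemma mem_Qtot_of_Amap : Amap A T i (Qtot A T i) ⊆ Qtot A T i := by
  intro v hv
  rcases hv with hv | ⟨hD, hc⟩
  · exact Qfun_subset_Qtot A T i 0 (Rreg_subset_Qfun A T i 0 hv)
  · rcases hc with ⟨ho, hall⟩ | ⟨ho, w, hw, hwQ⟩
    · set α := ⨆ w : {w : V // A.E v w}, Order.succ (rk A T i (w : V)) with hα
      refine Qfun_subset_Qtot A T i α ?_
      rw [Qfun_eq]
      refine Or.inr ⟨hD, Or.inl ⟨ho, fun w hw' => ?_⟩⟩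
      have hwQ' := hall w hw'
      refine Set.mem_iUnion.mpr ⟨⟨rk A T i w, ?_⟩, rk_mem A T i hwQ'⟩
      calc rk A T i w < Order.succ (rk A T i w) := Order.lt_succ _
      _ ≤ α := le_ciSup (Ordinal.bddAbove_range _) (⟨w, hw'⟩ : {w : V // A.E v w})
    · refine Qfun_subset_Qtot A T i (Order.succ (rk A T i w)) ?_
      rw [Qfun_eq]
      refine Or.inr ⟨hD, Or.inr ⟨ho, w, hw, ?_⟩⟩
      exact Set.mem_iUnion.mpr ⟨⟨rk A T i w, Order.lt_succ _⟩, rk_mem A T i hwQ⟩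

lemma stepQ_i {v : V} (hv : v ∈ Qtot A T i) (hvR : v ∉ Rreg A T i)
    (ho : A.owner v = i) : ∀ w, A.E v w → w ∈ Qtot A T i ∧ rk A T i w < rk A T i v := by
  have h := rk_mem A T i hv
  rw [Qfun_eq] at h
  rcases h with h | ⟨_, hc⟩
  · exact absurd h hvR
  rcases hc with ⟨_, hall⟩ | ⟨ho', _⟩
  · intro w hw
    obtain ⟨S, ⟨⟨β, hβ⟩, rfl⟩, hm⟩ := hall w hw
    exact ⟨Qfun_subset_Qtot A T i β hm, lt_of_le_of_lt (rk_le A T i hm) hβ⟩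
  · exact absurd ho ho'

lemma stepQ_c {v : V} (hv : v ∈ Qtot A T i) (hvR : v ∉ Rreg A T i)
    (ho : A.owner v ≠ i) : ∃ w, A.E v w ∧ w ∈ Qtot A T i ∧ rk A T i w < rk A T i v := by
  have h := rk_mem A T i hv
  rw [Qfun_eq] at h
  rcases h with h | ⟨_, hc⟩
  · exact absurd h hvR
  rcases hc with ⟨ho', _⟩ | ⟨_, w, hw, hm⟩
  · exact absurd ho' ho
  · obtain ⟨S, ⟨⟨β, hβ⟩, rfl⟩, hm'⟩ := hm
    exact ⟨w, hw, Qfun_subset_Qtot A T i β hm', lt_of_le_of_lt (rk_le A T i hm') hβ⟩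

lemma notCi_succ_i {v w : V} (ho : A.owner v = i) (hD : v ∈ Dreg A T i) (hE : A.E v w) :
    w ∈ Dreg A T i := by
  intro hw
  exact hD (ci_step_i ho hE hw)

lemma notQ_i {v : V} (hD : v ∈ Dreg A T i) (hQ : v ∉ Qtot A T i) (ho : A.owner v = i) :
    ∃ w, A.E v w ∧ w ∉ Qtot A T i := by
  by_contra hcon
  push_neg at hcon
  exact hQ (mem_Qtot_of_Amap A T i (Or.inr ⟨hD, Or.inl ⟨ho, hcon⟩⟩))

lemma notQ_c {v : V} (hD : v ∈ Dreg A T i) (hQ : v ∉ Qtot A T i) (ho : A.owner v ≠ i) :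
    ∀ w, A.E v w → w ∉ Qtot A T i := by
  intro w hw hwQ
  exact hQ (mem_Qtot_of_Amap A T i (Or.inr ⟨hD, Or.inr ⟨ho, w, hw, hwQ⟩⟩))

lemma notQ_T {v : V} (hD : v ∈ Dreg A T i) (hQ : v ∉ Qtot A T i) : v ∉ T := by
  intro hT
  exact hQ (Qfun_subset_Qtot A T i 0 (Rreg_subset_Qfun A T i 0 ⟨hT, hD⟩))

noncomputable def esc (v : V) : V :=
  if h : ∃ w, A.E v w ∧ w ∉ Qtot A T i then Classical.choose h else A.dflt v

lemma esc_edge (v : V) : A.E v (esc A T i v) := by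
  unfold esc
  split_ifs with h
  · exact (Classical.choose_spec h).1
  · exact A.dflt_edge v

lemma esc_spec {v : V} (h : ∃ w, A.E v w ∧ w ∉ Qtot A T i) : esc A T i v ∉ Qtot A T i := by
  unfold esc
  rw [dif_pos h]
  exact (Classical.choose_spec h).2

noncomputable def firstC : List V → Option ℕ
  | [] => none
  | x :: t => if x ∈ Ci A T i then some 0 else (firstC t).map (· + 1)

lemma firstC_none {l : List V} (h : ∀ x ∈ l, x ∉ Ci A T i) : firstC A T i l = none := by
  induction l with
  | nil => rfl
  | cons x t ih =>
      rw [firstC, if_neg (h x (by simp)), ih (fun y hy => h y (by simp [hy]))]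
      rfl

lemma firstC_pref_none {π : ℕ → V} {m : ℕ} (h : ∀ q < m, π q ∉ Ci A T i) :
    firstC A T i (pref π m) = none := by
  refine firstC_none A T i ?_
  intro x hx
  obtain ⟨q, hq, rfl⟩ := pref_mem hx
  exact h q hq

lemma firstC_pref {π : ℕ → V} {m p : ℕ} (hpm : p < m) (hb : ∀ q < p, π q ∉ Ci A T i)
    (hp : π p ∈ Ci A T i) : firstC A T i (pref π m) = some p := by
  induction p generalizing π m with
  | zero =>
      obtain ⟨m', rfl⟩ : ∃ m', m = m' + 1 := ⟨m - 1, by omega⟩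
      rw [pref_succ_cons, firstC, if_pos hp]
  | succ p ih =>
      obtain ⟨m', rfl⟩ : ∃ m', m = m' + 1 := ⟨m - 1, by omega⟩
      rw [pref_succ_cons, firstC, if_neg (hb 0 (by omega))]
      have := ih (π := shift π 1) (m := m') (by omega)
        (fun q hq => hb (q + 1) (by omega)) hp
      rw [this]
      rfl

noncomputable def escStrat : A.Strategy where
  next h u :=
    (firstC A T i (h ++ [u])).elim
      (if A.owner u = i then esc A T i u else A.dflt u)
      (fun p => if p < h.length then (winStrat A T i (h.getD p u)).next (h.drop p) u
                else (winStrat A T i u).next [] u)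
  valid := by
    intro h u
    rcases hfc : firstC A T i (h ++ [u]) with _ | p
    · simp only [Option.elim]
      split_ifs
      · exact esc_edge A T i u
      · exact A.dflt_edge u
    · simp only [Option.elim]
      split_ifs
      · exact (winStrat A T i _).valid _ _
      · exact (winStrat A T i u).valid [] u

lemma D_subset_Q : Dreg A T i ⊆ Qtot A T i := by
  intro d hd
  by_contra hdQ
  refine hd ⟨escStrat A T i, ?_⟩
  intro π hπ h0 hcons
  have inv : ∀ m, (∀ q ≤ m, π q ∈ Dreg A T i ∧ π q ∉ Qtot A T i) ∨
      (∃ p, p ≤ m ∧ (∀ q < p, π q ∈ Dreg A T i ∧ π q ∉ Qtot A T i) ∧ π p ∈ Ci A T i) := by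
    intro m
    induction m with
    | zero =>
        left
        intro q hq
        have hq0 : q = 0 := by omega
        subst hq0
        rw [h0]
        exact ⟨hd, hdQ⟩
    | succ m ih =>
        rcases ih with hall | ⟨p, hp, hbef, hCi⟩
        · by_cases hC : π (m + 1) ∈ Ci A T i
          · exact Or.inr ⟨m + 1, le_rfl, fun q hq => hall q (by omega), hC⟩
          · left
            intro q hq
            rcases Nat.lt_or_ge q (m + 1) with hlt | hge
            · exact hall q (by omega)
            · have hq1 : q = m + 1 := by omega
              subst hq1
              refine ⟨hC, ?_⟩
              by_cases ho : A.owner (π m) = i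
              · have hmove := hcons m ho
                have hfn : firstC A T i (pref π (m + 1)) = none :=
                  firstC_pref_none A T i (fun q hq => (hall q (by omega)).1)
                rw [pref_succ] at hfn
                rw [hmove]
                show (escStrat A T i).next (pref π m) (π m) ∉ Qtot A T i
                unfold escStrat
                dsimp only
                rw [hfn]
                simp only [Option.elim]
                rw [if_pos ho]
                exact esc_spec A T i (notQ_i A T i (hall m le_rfl).1 (hall m le_rfl).2 ho)
              · exact notQ_c A T i (hall m le_rfl).1 (hall m le_rfl).2 ho (π (m + 1)) (hπ m)
        · exact Or.inr ⟨p, by omega, hbef, hCi⟩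
  by_cases hCi : ∃ m, π m ∈ Ci A T i
  · set p := Nat.find hCi with hpdef
    have hpC : π p ∈ Ci A T i := Nat.find_spec hCi
    have hbef : ∀ q < p, π q ∉ Ci A T i := fun q hq => Nat.find_min hCi hq
    have hconsW : A.Consistent i (winStrat A T i (π p)) (shift π p) := by
      intro j hj
      have hc := hcons (j + p) (by simpa [shift] using hj)
      have hfc : firstC A T i (pref π (j + p + 1)) = some p :=
        firstC_pref A T i (by omega) hbef hpC
      rw [pref_succ] at hfc
      show π (j + 1 + p) = _
      have hidx : j + 1 + p = j + p + 1 := by omega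
      rw [hidx, hc]
      show (escStrat A T i).next (pref π (j + p)) (π (j + p)) = _
      unfold escStrat
      dsimp only
      rw [hfc]
      simp only [Option.elim]
      cases j with
      | zero =>
          rw [if_neg (by simp)]
          simp only [pref_zero, shift_apply, Nat.zero_add]
      | succ m =>
          rw [if_pos (by simp)]
          rw [pref_getD π (by omega), pref_drop]
          rfl
    have hsh := winStrat_spec hpC (shift π p) (isPlay_shift hπ p) (by simp [shift]) hconsW
    exact (coBuchi_shift_iff π p).mp hsh
  · push_neg at hCi
    refine ⟨0, fun k _ => ?_⟩
    rcases inv k with hall | ⟨p, _, _, hC⟩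
    · exact notQ_T A T i (hall k le_rfl).1 (hall k le_rfl).2
    · exact absurd hC (hCi p)

noncomputable def gP : V → V := fun v =>
  if h1 : v ∈ Rreg A T i ∧ ∃ w, A.E v w ∧ w ∈ Dreg A T i then Classical.choose h1.2
  else if h2 : ∃ w, A.E v w ∧ w ∈ Qtot A T i ∧ rk A T i w < rk A T i v then Classical.choose h2
  else A.dflt v

lemma gP_edge (v : V) : A.E v (gP A T i v) := by
  unfold gP
  split_ifs with h1 h2
  · exact (Classical.choose_spec h1.2).1
  · exact (Classical.choose_spec h2).1
  · exact A.dflt_edge v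

lemma exists_succ_D_of_R {v : V} (hv : v ∈ Rreg A T i) (ho : A.owner v ≠ i) :
    ∃ w, A.E v w ∧ w ∈ Dreg A T i := by
  by_contra hcon
  push_neg at hcon
  refine hv.2 (ci_step_c ho ?_)
  intro w hw
  by_contra hwC
  exact (hcon w hw) hwC

lemma punish {ξ : ℕ → V} (h0 : ξ 0 ∈ Dreg A T i) (hp : A.IsPlay ξ)
    (hg : ∀ m, A.owner (ξ m) ≠ i → ξ (m + 1) = gP A T i (ξ m)) :
    ∀ M, ∃ m, M ≤ m ∧ ξ m ∈ T := by
  have hD : ∀ m, ξ m ∈ Dreg A T i := by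
    intro m
    induction m with
    | zero => exact h0
    | succ m ih =>
        by_cases ho : A.owner (ξ m) = i
        · exact notCi_succ_i A T i ho ih (hp m)
        · rw [hg m ho]
          unfold gP
          by_cases hR : ξ m ∈ Rreg A T i
          · have hex := exists_succ_D_of_R A T i hR ho
            rw [dif_pos ⟨hR, hex⟩]
            exact (Classical.choose_spec (⟨hR, hex⟩ : _ ∧ _).2).2
          · rw [dif_neg (fun h1 => hR h1.1)]
            have h2 := stepQ_c A T i (D_subset_Q A T i ih) hR ho
            rw [dif_pos h2]
            exact Qtot_subset_D A T i (Classical.choose_spec h2).2.1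
  intro M
  by_contra hcon
  push_neg at hcon
  have hnR : ∀ m, M ≤ m → ξ m ∉ Rreg A T i := fun m hm hR => hcon m hm hR.1
  have hdec : ∀ t, rk A T i (ξ (M + t + 1)) < rk A T i (ξ (M + t)) := by
    intro t
    have hQ : ξ (M + t) ∈ Qtot A T i := D_subset_Q A T i (hD _)
    have hR := hnR (M + t) (by omega)
    by_cases ho : A.owner (ξ (M + t)) = i
    · exact (stepQ_i A T i hQ hR ho (ξ (M + t + 1)) (hp _)).2
    · rw [hg _ ho]
      unfold gP
      rw [dif_neg (fun h1 => hR h1.1)]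
      have h2 := stepQ_c A T i hQ hR ho
      rw [dif_pos h2]
      exact (Classical.choose_spec h2).2.2
  set f : ℕ → Ordinal.{0} := fun t => rk A T i (ξ (M + t)) with hf
  have hne : (Set.range f).Nonempty := ⟨f 0, 0, rfl⟩
  obtain ⟨t, ht⟩ := Ordinal.lt_wf.min_mem (Set.range f) hne
  refine Ordinal.lt_wf.not_lt_min (Set.range f) (⟨t + 1, rfl⟩ : f (t + 1) ∈ Set.range f) ?_
  rw [← ht]
  exact hdec t

end Attractor

end Arena
namespace Arena

variable {V : Type} {n : ℕ}

noncomputable def devStrat (A : Arena V n) (k : ℕ) (ρ : ℕ → V) (hρ : A.IsPlay ρ)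
    (w : A.Strategy) : A.Strategy where
  next h u := if h.length < k then (if u = ρ h.length then ρ (h.length + 1) else A.dflt u)
              else w.next (h.drop k) u
  valid := by
    intro h u
    split_ifs with h1 h2
    · subst h2; exact hρ h.length
    · exact A.dflt_edge u
    · exact w.valid _ _

lemma satCoBuchi_iff {T : Fin n → Set V} {π : ℕ → V} {i : Fin n} :
    i ∈ satCoBuchi T π ↔ π ∈ CoBuchiObj (T i) := Iff.rfl

lemma notCi_outcome (A : Arena V n) (T : Fin n → Set V) (v0 : V) (σ' : Fin n → A.Strategy)
    (hNE : A.IsNEObj (fun i => CoBuchiObj (T i)) σ' v0) {i : Fin n}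
    (hi : i ∉ satCoBuchi T (outcome A σ' v0)) :
    ∀ k, outcome A σ' v0 k ∉ Ci A (T i) i := by
  intro k hk
  set π := outcome A σ' v0 with hπdef
  set w := winStrat A (T i) i (π k) with hwdef
  set τ := devStrat A k π (outcome_isPlay A σ' v0) w with hτdef
  set ξ := outcome A (Function.update σ' i τ) v0 with hξdef
  have hξplay : A.IsPlay ξ := outcome_isPlay _ _ _
  have hagree : ∀ j, j ≤ k → ξ j = π j := by
    intro j
    induction j using Nat.strong_induction_on with
    | _ j ih =>
      intro hj
      match j with
      | 0 => rfl
      | jj + 1 =>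
        have hpref : pref ξ jj = pref π jj :=
          pref_congr (fun m hm => ih m (by omega) (by omega))
        have hstep := outcome_succ A (Function.update σ' i τ) v0 jj
        rw [← hξdef] at hstep
        rw [hstep, hpref, ih jj (by omega) (by omega)]
        by_cases ho : A.owner (π jj) = i
        · rw [ho, Function.update_self]
          rw [hτdef]
          show (if (pref π jj).length < k then _ else _) = _
          rw [pref_length, if_pos (by omega), if_pos rfl]
        · rw [Function.update_of_ne ho]
          exact (outcome_succ A σ' v0 jj).symm
  have hcons : A.Consistent i w (shift ξ k) := by
    intro j hj
    have hstep := outcome_succ A (Function.update σ' i τ) v0 (j + k)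
    rw [← hξdef] at hstep
    show ξ (j + 1 + k) = _
    rw [show j + 1 + k = (j + k) + 1 by omega, hstep]
    have ho : A.owner (ξ (j + k)) = i := hj
    rw [ho, Function.update_self, hτdef]
    show (if (pref ξ (j + k)).length < k then _ else _) = _
    rw [pref_length, if_neg (by omega), pref_drop]
    rfl
  have hwin := winStrat_spec hk (shift ξ k) (isPlay_shift hξplay k)
    (by simp [shift, hagree k le_rfl]) hcons
  have hξCo : ξ ∈ CoBuchiObj (T i) := (coBuchi_shift_iff ξ k).mp hwin
  exact hi (hNE i τ hξCo)

end Arena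
namespace Arena

variable {V : Type}

lemma exists_nodup_path {E : V → V → Prop} :
    ∀ (N : ℕ) (l : List V), l.length ≤ N → List.Chain' E l → l ≠ [] →
    ∃ l', List.Chain' E l' ∧ l' ≠ [] ∧ l'.head? = l.head? ∧ l'.getLast? = l.getLast? ∧
      l'.Nodup ∧ ∀ x ∈ l', x ∈ l := by
  intro N
  induction N with
  | zero =>
      intro l hl _ hne
      exact absurd (List.length_eq_zero_iff.mp (by omega)) hne
  | succ N ih =>
      intro l hl hch hne
      by_cases hnd : l.Nodup
      · exact ⟨l, hch, hne, rfl, rfl, hnd, fun x hx => hx⟩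
      · rw [List.Nodup, List.pairwise_iff_get] at hnd
        push_neg at hnd
        obtain ⟨⟨i, hi⟩, ⟨j, hj⟩, hij, heq⟩ := hnd
        have hijlt : i < j := hij
        set l2 := l.take (i + 1) ++ l.drop (j + 1) with hl2
        have htlen : (l.take (i + 1)).length = i + 1 := by
          rw [List.length_take]; omega
        have hlen2 : l2.length = (i + 1) + (l.length - (j + 1)) := by
          rw [hl2, List.length_append, htlen, List.length_drop]
        have hlast_take : (l.take (i + 1)).getLast? = some (l.get ⟨i, hi⟩) := by
          rw [List.getLast?_eq_getElem?, htlen]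
          simp only [Nat.add_sub_cancel]
          rw [List.getElem?_take_of_lt (by omega)]
          rw [List.getElem?_eq_getElem hi]
          rfl
        have hch2 : List.Chain' E l2 := by
          rw [hl2]; refine List.isChain_append.mpr ?_
          refine ⟨hch.take _, hch.drop _, ?_⟩
          intro x hx y hy
          rw [hlast_take, Option.mem_def, Option.some.injEq] at hx
          rw [List.head?_drop, Option.mem_def] at hy
          have hj1 : j + 1 < l.length := by
            by_contra hcon
            rw [List.getElem?_eq_none (by omega)] at hy
            cases hy
          rw [List.getElem?_eq_getElem hj1, Option.some.injEq] at hy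
          subst hx
          subst hy
          rw [heq]
          have := List.isChain_iff_getElem.mp hch j (by omega)
          convert this using 2
          rfl
        have hne2 : l2 ≠ [] := by
          intro hcon
          have := congrArg List.length hcon
          rw [hlen2] at this
          simp at this
        have hhead2 : l2.head? = l.head? := by
          rw [hl2]
          rcases l with _ | ⟨a, t⟩
          · simp at hne
          · rw [List.take_succ_cons, List.cons_append]
            rfl
        have hlast2 : l2.getLast? = l.getLast? := by
          rw [hl2]
          rcases hdrop : l.drop (j + 1) with _ | ⟨b, t⟩
          · have hj1 : l.length = j + 1 := by
              have := congrArg List.length hdrop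
              rw [List.length_drop] at this
              simp at this
              omega
            rw [List.append_nil, hlast_take, heq]
            rw [List.getLast?_eq_getElem?]
            have hidx : l.length - 1 = j := by omega
            rw [hidx, List.getElem?_eq_getElem hj]
            rfl
          · rw [List.getLast?_append_of_ne_nil _ (by simp)]
            rw [← hdrop]
            rw [List.getLast?_eq_getElem?, List.getLast?_eq_getElem?, List.length_drop]
            rw [List.getElem?_drop]
            have hlt : j + 1 < l.length := by
              have hcl := congrArg List.length hdrop
              rw [List.length_drop] at hcl
              simp only [List.length_cons] at hcl
              omega
            congr 1
            omega
        have hlen2' : l2.length ≤ N := by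
          rw [hlen2]
          omega
        obtain ⟨l', h1, h2, h3, h4, h5, h6⟩ := ih l2 hlen2' hch2 hne2
        refine ⟨l', h1, h2, by rw [h3, hhead2], by rw [h4, hlast2], h5, ?_⟩
        intro x hx
        have := h6 x hx
        rw [hl2, List.mem_append] at this
        rcases this with h | h
        · exact List.mem_of_mem_take h
        · exact List.mem_of_mem_drop h

end Arena
namespace Arena

variable {V : Type} {n : ℕ}

lemma exists_good_play (A : Arena V n) (T : Fin n → Set V) (v0 : V) (σ' : Fin n → A.Strategy)
    (hNE : A.IsNEObj (fun i => CoBuchiObj (T i)) σ' v0) :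
    ∃ (N : ℕ) (ρ : ℕ → V) (f : V → V) (O : Set V),
      A.IsPlay ρ ∧ ρ 0 = v0 ∧
      satCoBuchi T (outcome A σ' v0) ⊆ satCoBuchi T ρ ∧
      (∀ i, i ∉ satCoBuchi T ρ → ∀ m, ρ m ∉ Ci A (T i) i) ∧
      (∀ m, N ≤ m → ρ m ∈ O) ∧
      (∀ m, N ≤ m → f (ρ m) = ρ (m + 1)) ∧
      (∀ v ∈ O, f v ∈ O ∧ A.E v (f v)) ∧
      (∀ i, i ∉ satCoBuchi T ρ → ∀ v ∈ O, v ∉ Ci A (T i) i) ∧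
      (∀ i, i ∉ satCoBuchi T ρ → ∀ ξ : ℕ → V, A.IsPlay ξ → (∀ m, ξ m ∈ O) →
        (∀ m, A.owner (ξ m) ≠ i → ξ (m + 1) = f (ξ m)) →
        ∀ M, ∃ m, M ≤ m ∧ ξ m ∈ T i) ∧
      (Finite V → max N 1 ≤ Nat.card V) := by
  classical
  set π := outcome A σ' v0 with hπdef
  set W := satCoBuchi T π with hWdef
  set Cand : Set (ℕ → V) := {η | A.IsPlay η ∧ η 0 = v0 ∧ W ⊆ satCoBuchi T η ∧
    ∀ i, i ∉ satCoBuchi T η → ∀ m, η m ∉ Ci A (T i) i} with hCdef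
  have hπC : π ∈ Cand :=
    ⟨outcome_isPlay A σ' v0, rfl, subset_rfl, fun i hi m => notCi_outcome A T v0 σ' hNE hi m⟩
  set cards := (fun η => (satCoBuchi T η).ncard) '' Cand with hcards
  have hbddc : ∀ c ∈ cards, c ≤ n := by
    rintro c ⟨η, _, rfl⟩
    calc (satCoBuchi T η).ncard ≤ (Set.univ : Set (Fin n)).ncard :=
          Set.ncard_le_ncard (Set.subset_univ _) (Set.toFinite _)
    _ = n := by rw [Set.ncard_univ, Nat.card_eq_fintype_card, Fintype.card_fin]
  have hbdd : BddAbove cards := ⟨n, fun c hc => hbddc c hc⟩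
  have hnec : cards.Nonempty := ⟨_, π, hπC, rfl⟩
  obtain ⟨η, hηC, hηcard⟩ := Nat.sSup_mem hnec hbdd
  have hηcard' : (satCoBuchi T η).ncard = sSup cards := hηcard
  have hmax : ∀ η' ∈ Cand, (satCoBuchi T η').ncard ≤ (satCoBuchi T η).ncard := by
    intro η' hη'
    rw [hηcard']
    exact le_csSup hbdd ⟨η', hη', rfl⟩
  obtain ⟨hηp, hη0, hηW, hηCi⟩ := hηC
  set Astar := satCoBuchi T η with hAstar
  -- avoidance point
  have hNj : ∀ j ∈ Astar, ∃ Nj, ∀ k, Nj ≤ k → η k ∉ T j := fun j hj => hj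
  set bnd : Fin n → ℕ :=
    (fun j : Fin n => if hj : j ∈ Astar then Classical.choose (hNj j hj) else 0) with hbnddef
  set N0 : ℕ := Finset.univ.sup bnd with hN0def
  have hN0 : ∀ j ∈ Astar, ∀ k, N0 ≤ k → η k ∉ T j := by
    intro j hj k hk
    refine Classical.choose_spec (hNj j hj) k (le_trans ?_ hk)
    have h1 : bnd j ≤ N0 := Finset.le_sup (Finset.mem_univ j)
    have h2 : bnd j = Classical.choose (hNj j hj) := dif_pos hj
    omega
  -- range of the tail, first-occurrence successor, orbit
  set Rng : Set V := {w | ∃ m, η (N0 + m) = w} with hRng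
  set fm : V → V := fun v =>
    if hv : ∃ m, η (N0 + m) = v then η (N0 + Nat.find hv + 1) else A.dflt v with hfmdef
  have hfm : ∀ v ∈ Rng, fm v ∈ Rng ∧ A.E v (fm v) := by
    intro v hv
    have hv' : ∃ m, η (N0 + m) = v := hv
    constructor
    · rw [hfmdef]
      dsimp only
      rw [dif_pos hv']
      exact ⟨Nat.find hv' + 1, by rw [← Nat.add_assoc]⟩
    · have hfind : η (N0 + Nat.find hv') = v := Nat.find_spec hv'
      have hedge := hηp (N0 + Nat.find hv')
      rw [hfind] at hedge
      rw [hfmdef]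
      dsimp only
      rw [dif_pos hv']
      exact hedge
  set orb : ℕ → V := fun m => Nat.rec (η N0) (fun _ ih => fm ih) m with horbdef
  have horb0 : orb 0 = η N0 := rfl
  have horbS : ∀ m, orb (m + 1) = fm (orb m) := fun m => rfl
  have horbR : ∀ m, orb m ∈ Rng := by
    intro m
    induction m with
    | zero => exact ⟨0, by rw [Nat.add_zero, horb0]⟩
    | succ m ih => exact (hfm _ ih).1
  set O : Set V := Set.range orb with hO
  have hOR : O ⊆ Rng := by rintro v ⟨m, rfl⟩; exact horbR m
  have hfmO : ∀ v ∈ O, fm v ∈ O ∧ A.E v (fm v) := by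
    rintro v ⟨m, rfl⟩
    exact ⟨⟨m + 1, (horbS m).symm⟩, (hfm _ (horbR m)).2⟩
  -- dedup'd prefix
  set P0 := pref η (N0 + 1) with hP0
  obtain ⟨L, hLch, hLne, hLhd, hLlast, hLnd, hLsub⟩ :=
    exists_nodup_path P0.length P0 le_rfl (chain'_pref hηp (N0 + 1))
      (by rw [hP0]; intro hcon; have := congrArg List.length hcon; simp at this)
  have hLlen : 1 ≤ L.length := by
    rcases L with _ | _
    · exact absurd rfl hLne
    · simp
  obtain ⟨N, hLlen'⟩ : ∃ N, L.length = N + 1 := ⟨L.length - 1, by omega⟩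
  -- getD facts about L
  have hLgetD : ∀ m, m < L.length → L.getD m v0 ∈ L := by
    intro m hm
    rw [List.getD_eq_getElem?_getD, List.getElem?_eq_getElem hm]
    exact List.getElem_mem _
  have hLmem : ∀ x ∈ L, ∃ q, q ≤ N0 ∧ η q = x := by
    intro x hx
    obtain ⟨q, hq, rfl⟩ := pref_mem (hLsub x hx)
    exact ⟨q, by omega, rfl⟩
  have hLhd' : L.getD 0 v0 = v0 := by
    have h1 : P0.head? = some (η 0) := by
      rw [hP0, List.head?_eq_getElem?, pref_get? η (by omega)]
    rw [List.getD_eq_getElem?_getD, ← List.head?_eq_getElem?, hLhd, h1, hη0]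
    rfl
  have hLlast' : L.getD N v0 = η N0 := by
    have h1 : P0.getLast? = some (η N0) := by
      rw [hP0, List.getLast?_eq_getElem?, pref_length]
      have h2 : N0 + 1 - 1 = N0 := by omega
      rw [h2, pref_get? η (by omega)]
    have h2 := hLlast
    rw [h1, List.getLast?_eq_getElem?, hLlen', Nat.add_sub_cancel] at h2
    rw [List.getD_eq_getElem?_getD, h2]
    rfl
  have hLedge : ∀ m, m + 1 < L.length → A.E (L.getD m v0) (L.getD (m + 1) v0) := by
    intro m hm
    have := List.isChain_iff_getElem.mp hLch m (by omega)
    rw [List.getD_eq_getElem?_getD, List.getElem?_eq_getElem (by omega),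
      List.getD_eq_getElem?_getD, List.getElem?_eq_getElem (by omega)]
    exact this
  -- the constructed play
  set ρ : ℕ → V := fun m => if m < N then L.getD m v0 else orb (m - N) with hρdef
  have hρL : ∀ m, m ≤ N → ρ m = L.getD m v0 := by
    intro m hm
    rw [hρdef]
    dsimp only
    rcases Nat.lt_or_ge m N with h | h
    · rw [if_pos h]
    · have hmN : m = N := by omega
      rw [if_neg (by omega), hmN, Nat.sub_self, horb0, hLlast']
  have hρtail : ∀ m, N ≤ m → ρ m = orb (m - N) := by
    intro m hm
    rw [hρdef]
    dsimp only
    rw [if_neg (by omega)]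
  have hρ0 : ρ 0 = v0 := by
    rw [hρL 0 (by omega), hLhd']
  have hρp : A.IsPlay ρ := by
    intro m
    rcases Nat.lt_or_ge m N with h | h
    · rw [hρL m (by omega), hρL (m + 1) (by omega)]
      exact hLedge m (by omega)
    · rw [hρtail m h, hρtail (m + 1) (by omega)]
      have : m + 1 - N = (m - N) + 1 := by omega
      rw [this, horbS]
      exact (hfm _ (horbR _)).2
  have hρO : ∀ m, N ≤ m → ρ m ∈ O := by
    intro m hm
    rw [hρtail m hm]
    exact ⟨m - N, rfl⟩
  have hρf : ∀ m, N ≤ m → fm (ρ m) = ρ (m + 1) := by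
    intro m hm
    rw [hρtail m hm, hρtail (m + 1) (by omega)]
    have h1 : m + 1 - N = (m - N) + 1 := by omega
    rw [h1, horbS]
  -- avoidance facts
  have hRngT : ∀ j ∈ Astar, ∀ v ∈ Rng, v ∉ T j := by
    rintro j hj v ⟨m, rfl⟩
    exact hN0 j hj (N0 + m) (by omega)
  have hRngC : ∀ i, i ∉ Astar → ∀ v ∈ Rng, v ∉ Ci A (T i) i := by
    rintro i hi v ⟨m, rfl⟩
    exact hηCi i hi (N0 + m)
  have hLCi : ∀ i, i ∉ Astar → ∀ x ∈ L, x ∉ Ci A (T i) i := by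
    intro i hi x hx
    obtain ⟨q, _, rfl⟩ := hLmem x hx
    exact hηCi i hi q
  have hρCall : ∀ i, i ∉ Astar → ∀ m, ρ m ∉ Ci A (T i) i := by
    intro i hi m
    rcases Nat.lt_or_ge m N with h | h
    · rw [hρL m (by omega)]
      exact hLCi i hi _ (hLgetD m (by omega))
    · exact hRngC i hi _ (hOR (hρO m h))
  have hAsub : Astar ⊆ satCoBuchi T ρ := by
    intro j hj
    exact ⟨N, fun k hk => hRngT j hj _ (hOR (hρO k hk))⟩
  have hWsub : W ⊆ satCoBuchi T ρ := subset_trans hηW hAsub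
  have hnotA : ∀ i, i ∉ satCoBuchi T ρ → i ∉ Astar := fun i hi hA => hi (hAsub hA)
  -- the key maximality argument
  have hRi : ∀ i, i ∉ satCoBuchi T ρ → ∀ ξ : ℕ → V, A.IsPlay ξ → (∀ m, ξ m ∈ O) →
      (∀ m, A.owner (ξ m) ≠ i → ξ (m + 1) = fm (ξ m)) →
      ∀ M, ∃ m, M ≤ m ∧ ξ m ∈ T i := by
    intro i hi ξ hξp hξO hξf M
    by_contra hcon
    push_neg at hcon
    have hiA : i ∉ Astar := hnotA i hi
    obtain ⟨m0, hm0⟩ := hξO M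
    set q := N + m0 with hq
    have hρq : ρ q = ξ M := by
      rw [hρtail q (by omega)]
      have : q - N = m0 := by omega
      rw [this, hm0]
    set η' : ℕ → V := fun m => if m < q then ρ m else ξ (m - q + M) with hη'def
    have hη'lt : ∀ m, m < q → η' m = ρ m := by
      intro m hm
      rw [hη'def]
      dsimp only
      rw [if_pos hm]
    have hη'ge : ∀ m, q ≤ m → η' m = ξ (m - q + M) := by
      intro m hm
      rw [hη'def]
      dsimp only
      rw [if_neg (by omega)]
    have hη'O : ∀ m, q ≤ m → η' m ∈ O := by
      intro m hm
      rw [hη'ge m hm]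
      exact hξO _
    have hη'0 : η' 0 = v0 := by
      rcases Nat.eq_zero_or_pos q with h0 | h0
      · rw [hη'ge 0 (by omega)]
        have h1 : 0 - q + M = M := by omega
        rw [h1, ← hρq, h0]
        exact hρ0
      · rw [hη'lt 0 h0, hρ0]
    have hη'p : A.IsPlay η' := by
      intro m
      rcases Nat.lt_or_ge (m + 1) q with h | h
      · rw [hη'lt m (by omega), hη'lt (m + 1) h]
        exact hρp m
      · rcases Nat.lt_or_ge m q with h2 | h2
        · have hmq : m + 1 = q := by omega
          rw [hη'lt m (by omega), hη'ge (m + 1) h]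
          have : m + 1 - q + M = M := by omega
          rw [this, ← hρq, ← hmq]
          exact hρp m
        · rw [hη'ge m (by omega), hη'ge (m + 1) (by omega)]
          have : m + 1 - q + M = (m - q + M) + 1 := by omega
          rw [this]
          exact hξp _
    have hη'A : Astar ⊆ satCoBuchi T η' := by
      intro j hj
      refine ⟨q, fun k hk => ?_⟩
      rw [hη'ge k hk]
      exact hRngT j hj _ (hOR (hξO _))
    have hη'i : i ∈ satCoBuchi T η' := by
      refine ⟨q, fun k hk => ?_⟩
      rw [hη'ge k hk]
      exact hcon (k - q + M) (by omega)
    have hη'C : η' ∈ Cand := by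
      refine ⟨hη'p, hη'0, subset_trans hηW hη'A, ?_⟩
      intro j hj m
      have hjA : j ∉ Astar := fun hA => hj (hη'A hA)
      rcases Nat.lt_or_ge m q with h | h
      · rw [hη'lt m h]
        exact hρCall j hjA m
      · rw [hη'ge m h]
        exact hRngC j hjA _ (hOR (hξO _))
    have hss : Astar ⊂ satCoBuchi T η' := by
      refine ⟨hη'A, fun hts => hiA (hts hη'i)⟩
    have hlt := Set.ncard_lt_ncard hss (Set.toFinite _)
    have hle := hmax η' hη'C
    omega
  have hbound : Finite V → max N 1 ≤ Nat.card V := by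
    intro hfin
    haveI : Nonempty V := ⟨v0⟩
    haveI := Fintype.ofFinite V
    have hcard := hLnd.length_le_card
    have hpos : 0 < Nat.card V := Nat.card_pos
    rw [Nat.card_eq_fintype_card]
    omega
  exact ⟨N, ρ, fm, O, hρp, hρ0, hWsub, fun i hi m => hρCall i (hnotA i hi) m, hρO, hρf,
    hfmO, fun i hi v hv => hRngC i (hnotA i hi) v (hOR hv), hRi, hbound⟩

end Arena
namespace Arena

variable {V : Type} {n : ℕ}

/-- Memory states for the constructed finite-memory profile. -/
abbrev MacM (n K : ℕ) : Type := Fin K ⊕ (Fin n ⊕ Fin n)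

/-- Memory update: prefix counter / tail mode (recording the owner of the previous
vertex) / punishment mode. -/
noncomputable def mUp (A : Arena V n) (ρ : ℕ → V) (O : Set V) (N K : ℕ) (hNK : N ≤ K) :
    MacM n K → V → MacM n K
  | Sum.inl c, v =>
      if v = ρ (c : ℕ) then
        (if h : (c : ℕ) + 1 < N then Sum.inl ⟨(c : ℕ) + 1, lt_of_lt_of_le h hNK⟩
         else Sum.inr (Sum.inl (A.owner v)))
      else Sum.inr (Sum.inr (A.owner (ρ ((c : ℕ) - 1))))
  | Sum.inr (Sum.inl j), v =>
      if v ∈ O then Sum.inr (Sum.inl (A.owner v)) else Sum.inr (Sum.inr j)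
  | Sum.inr (Sum.inr j), _ => Sum.inr (Sum.inr j)

/-- Next-move function: follow `ρ` on the prefix, follow `f` in the tail,
punish with `gP` otherwise. -/
noncomputable def mNxt (A : Arena V n) (T : Fin n → Set V) (ρ : ℕ → V) (f : V → V)
    (O : Set V) (K : ℕ) : MacM n K → V → V
  | Sum.inl c, v => if v = ρ (c : ℕ) then ρ ((c : ℕ) + 1)
      else gP A (T (A.owner (ρ ((c : ℕ) - 1)))) (A.owner (ρ ((c : ℕ) - 1))) v
  | Sum.inr (Sum.inl j), v => if v ∈ O then f v else gP A (T j) j v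
  | Sum.inr (Sum.inr j), v => gP A (T j) j v

lemma mNxt_valid (A : Arena V n) (T : Fin n → Set V) (ρ : ℕ → V) (f : V → V)
    (O : Set V) (K : ℕ) (hρp : A.IsPlay ρ) (hfO : ∀ v ∈ O, f v ∈ O ∧ A.E v (f v)) :
    ∀ (m : MacM n K) (v : V), A.E v (mNxt A T ρ f O K m v) := by
  intro m v
  match m with
  | Sum.inl c =>
      rw [mNxt]
      split_ifs with h
      · rw [h]; exact hρp _
      · exact gP_edge A _ _ v
  | Sum.inr (Sum.inl j) =>
      rw [mNxt]
      split_ifs with h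
      · exact (hfO v h).2
      · exact gP_edge A _ _ v
  | Sum.inr (Sum.inr j) =>
      rw [mNxt]
      exact gP_edge A _ _ v

end Arena
namespace Arena

variable {V : Type} {n : ℕ}

lemma main_construction (A : Arena V n) (T : Fin n → Set V) (v0 : V) (σ' : Fin n → A.Strategy)
    (hNE : A.IsNEObj (fun i => CoBuchiObj (T i)) σ' v0) :
    ∃ st : A.Strategy,
      A.IsNEObj (fun i => CoBuchiObj (T i)) (fun _ => st) v0 ∧
      satCoBuchi T (outcome A σ' v0) ⊆ satCoBuchi T (outcome A (fun _ => st) v0) ∧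
      FiniteMemory st ∧ (Finite V → HasMemorySize st (Nat.card V + 2 * n)) := by
  classical
  obtain ⟨N, ρ, f, O, hρp, hρ0, hWsub, hρCi, hρO, hρf, hfO, hOCi, hRi, hbound⟩ :=
    exists_good_play A T v0 σ' hNE
  set K := max N 1 with hKdef
  have hNK : N ≤ K := le_max_left N 1
  set up := mUp A ρ O N K hNK with hupdef
  set nxt := mNxt A T ρ f O K with hnxtdef
  set stOn : ℕ → MacM n K := fun m =>
    if h : m < N then Sum.inl ⟨m, lt_of_lt_of_le h hNK⟩
    else Sum.inr (Sum.inl (A.owner (ρ (m - 1)))) with hstOndef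
  set init : MacM n K := stOn 0 with hinitdef
  set st : A.Strategy := ⟨fun h v => nxt (h.foldl up init) v,
    fun h v => mNxt_valid A T ρ f O K hρp hfO _ v⟩ with hstdef
  set σ : Fin n → A.Strategy := fun _ => st with hσdef
  set mst : (ℕ → V) → ℕ → MacM n K := fun ξ m => (pref ξ m).foldl up init with hmstdef
  have hmst0 : ∀ ξ : ℕ → V, mst ξ 0 = init := fun ξ => rfl
  have hmstS : ∀ (ξ : ℕ → V) m, mst ξ (m + 1) = up (mst ξ m) (ξ m) := by
    intro ξ m
    rw [hmstdef]
    dsimp only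
    rw [pref_succ, List.foldl_append]
    rfl
  have hmstcongr : ∀ (ξ ξ' : ℕ → V) m, (∀ q, q < m → ξ q = ξ' q) → mst ξ m = mst ξ' m := by
    intro ξ ξ' m hq
    rw [hmstdef]
    dsimp only
    rw [pref_congr hq]
  have hmstρ : ∀ m, mst ρ m = stOn m := by
    intro m
    induction m with
    | zero => rw [hmst0, hinitdef]
    | succ m ih =>
        rw [hmstS, ih, hstOndef]
        dsimp only
        rcases Nat.lt_or_ge m N with h | h
        · rw [dif_pos h, hupdef]
          simp only [mUp, Fin.val_mk, eq_self_iff_true, if_true]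
          rcases Nat.lt_or_ge (m + 1) N with h2 | h2
          · rw [dif_pos h2, dif_pos h2]
          · rw [dif_neg (by omega), dif_neg (by omega)]
            simp only [Nat.add_sub_cancel]
        · rw [dif_neg (by omega), hupdef]
          simp only [mUp]
          rw [if_pos (hρO m h), dif_neg (by omega)]
          simp only [Nat.add_sub_cancel]
  have hnxtρ : ∀ m, nxt (stOn m) (ρ m) = ρ (m + 1) := by
    intro m
    rw [hstOndef]
    dsimp only
    rcases Nat.lt_or_ge m N with h | h
    · rw [dif_pos h, hnxtdef]
      simp only [mNxt, Fin.val_mk, eq_self_iff_true, if_true]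
    · rw [dif_neg (by omega), hnxtdef]
      simp only [mNxt]
      rw [if_pos (hρO m h)]
      exact hρf m h
  have houtc : ∀ m, outcome A σ v0 m = ρ m := by
    refine outcome_eq A σ v0 ρ hρ0 (fun j => ?_)
    have h1 : (σ (A.owner (ρ j))).next (pref ρ j) (ρ j) = nxt (mst ρ j) (ρ j) := rfl
    rw [h1, hmstρ j, hnxtρ j]
  have houtc' : outcome A σ v0 = ρ := funext houtc
  -- the Nash equilibrium property
  have hNE2 : A.IsNEObj (fun i => CoBuchiObj (T i)) σ v0 := by
    intro i τ hτ
    show outcome A σ v0 ∈ CoBuchiObj (T i)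
    rw [houtc']
    by_cases hgood : ρ ∈ CoBuchiObj (T i)
    · exact hgood
    exfalso
    have hiA : i ∉ satCoBuchi T ρ := hgood
    set ξ : ℕ → V := outcome A (Function.update σ i τ) v0 with hξdef
    have hξp : A.IsPlay ξ := outcome_isPlay _ _ _
    have hτ' : ξ ∈ CoBuchiObj (T i) := hτ
    have hmove : ∀ m, A.owner (ξ m) ≠ i → ξ (m + 1) = nxt (mst ξ m) (ξ m) := by
      intro m hm
      have hstep := outcome_succ A (Function.update σ i τ) v0 m
      rw [← hξdef] at hstep
      rw [hstep, Function.update_of_ne hm]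
    by_cases hsame : ∀ m, ξ m = ρ m
    · exact hgood (by rw [← funext hsame]; exact hτ')
    push_neg at hsame
    set k1 := Nat.find hsame with hk1def
    have hdiff : ξ k1 ≠ ρ k1 := Nat.find_spec hsame
    have hbef : ∀ m, m < k1 → ξ m = ρ m := fun m hm => not_not.mp (Nat.find_min hsame hm)
    have hk1pos : 0 < k1 := by
      rcases Nat.eq_zero_or_pos k1 with h0 | h0
      · exfalso
        refine hdiff ?_
        rw [h0]
        show ξ 0 = ρ 0
        rw [hρ0]
        rfl
      · exact h0
    obtain ⟨k, hk⟩ : ∃ k, k1 = k + 1 := ⟨k1 - 1, by omega⟩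
    have hmstag : ∀ m, m ≤ k1 → mst ξ m = stOn m := by
      intro m hm
      rw [hmstcongr ξ ρ m (fun q hq => hbef q (by omega)), hmstρ]
    have hown : A.owner (ρ k) = i := by
      by_contra hno
      have h1 := hmove k (by rw [hbef k (by omega)]; exact hno)
      rw [hbef k (by omega), hmstag k (by omega), hnxtρ k] at h1
      exact hdiff (by rw [hk]; exact h1)
    have hedge : A.E (ρ k) (ξ k1) := by
      have h1 := hξp k
      rw [hbef k (by omega)] at h1
      rw [hk]
      exact h1
    have hD1 : ξ k1 ∈ Dreg A (T i) i :=
      notCi_succ_i A (T i) i hown (hρCi i hiA k) hedge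
    -- generic punishment closure
    have hpunish : ∀ s, ξ s ∈ Dreg A (T i) i →
        (∀ m, s ≤ m → A.owner (ξ m) ≠ i → ξ (m + 1) = gP A (T i) i (ξ m)) → False := by
      intro s hsD hmoves
      have hio := punish A (T i) i (ξ := shift ξ s) (by simpa [shift] using hsD)
        (isPlay_shift hξp s) (fun m hm => by
          have := hmoves (m + s) (by omega) hm
          simpa [shift, Nat.add_right_comm] using this)
      refine not_coBuchi_of_io (fun M => ?_) hτ'
      obtain ⟨m, hm1, hm2⟩ := hio M
      exact ⟨m + s, by omega, hm2⟩
    rcases Nat.lt_or_ge k1 N with hcase | hcase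
    · -- deviation during the prefix: immediate punishment
      have hstk1 : mst ξ k1 = Sum.inl ⟨k1, lt_of_lt_of_le hcase hNK⟩ := by
        rw [hmstag k1 le_rfl, hstOndef]
        dsimp only
        rw [dif_pos hcase]
      have hentry : mst ξ (k1 + 1) = Sum.inr (Sum.inr i) := by
        rw [hmstS, hstk1, hupdef]
        simp only [mUp]
        rw [if_neg hdiff]
        rw [hk]
        simp only [Nat.add_sub_cancel]
        rw [hown]
      have habs : ∀ m, k1 + 1 ≤ m → mst ξ m = Sum.inr (Sum.inr i) := by
        intro m hm
        induction m with
        | zero => omega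
        | succ m ih =>
            rcases Nat.lt_or_ge m (k1 + 1) with h2 | h2
            · have hm1 : m = k1 := by omega
              rw [hm1]
              exact hentry
            · rw [hmstS, ih h2, hupdef]
              simp only [mUp]
      have hmoves : ∀ m, k1 ≤ m → A.owner (ξ m) ≠ i → ξ (m + 1) = gP A (T i) i (ξ m) := by
        intro m hm ho
        rcases Nat.eq_or_lt_of_le hm with he | hlt
        · have hm' : m = k1 := he.symm
          rw [hm'] at ho ⊢
          rw [hmove k1 ho, hstk1, hnxtdef]
          simp only [mNxt, Fin.val_mk]
          rw [if_neg hdiff]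
          rw [show k1 - 1 = k by omega, hown]
        · rw [hmove m ho, habs m (by omega), hnxtdef]
          simp only [mNxt]
      exact hpunish k1 hD1 hmoves
    · -- deviation in the tail
      have hstk1 : mst ξ k1 = Sum.inr (Sum.inl i) := by
        rw [hmstag k1 le_rfl, hstOndef]
        dsimp only
        rw [dif_neg (by omega), show k1 - 1 = k by omega, hown]
      by_cases hO : ∀ m, k1 ≤ m → ξ m ∈ O
      · -- remains in O-mode forever: use the maximality property
        have hsttail : ∀ m, k1 + 1 ≤ m → mst ξ m = Sum.inr (Sum.inl (A.owner (ξ (m - 1)))) := by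
          intro m hm
          induction m with
          | zero => omega
          | succ m ih =>
              rcases Nat.lt_or_ge m (k1 + 1) with h2 | h2
              · have hm1 : m = k1 := by omega
                rw [hmstS, hm1, hstk1, hupdef]
                simp only [mUp]
                rw [if_pos (hO k1 le_rfl)]
                rw [← hm1]
                simp only [Nat.add_sub_cancel]
              · rw [hmstS, ih h2, hupdef]
                simp only [mUp]
                rw [if_pos (hO m (by omega))]
                simp only [Nat.add_sub_cancel]
        have hfmoves : ∀ m, A.owner (shift ξ k1 m) ≠ i → shift ξ k1 (m + 1) = f (shift ξ k1 m) := by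
          intro m hm
          have h1 := hmove (m + k1) hm
          show ξ (m + 1 + k1) = _
          rw [show m + 1 + k1 = (m + k1) + 1 by omega, h1]
          have hstform : ∃ j, mst ξ (m + k1) = Sum.inr (Sum.inl j) := by
            rcases Nat.eq_zero_or_pos m with h0 | h0
            · exact ⟨i, by rw [h0, Nat.zero_add]; exact hstk1⟩
            · exact ⟨_, hsttail (m + k1) (by omega)⟩
          obtain ⟨j, hj⟩ := hstform
          rw [hj, hnxtdef]
          simp only [mNxt]
          rw [if_pos (hO (m + k1) (by omega))]
          rfl
        have hio := hRi i hiA (shift ξ k1) (isPlay_shift hξp k1)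
          (fun m => hO (m + k1) (by omega)) hfmoves
        refine not_coBuchi_of_io (fun M => ?_) hτ'
        obtain ⟨m, hm1, hm2⟩ := hio M
        exact ⟨m + k1, by omega, hm2⟩
      · push_neg at hO
        have hex : ∃ m, k1 ≤ m ∧ ξ m ∉ O := by
          obtain ⟨m, h1, h2⟩ := hO
          exact ⟨m, h1, h2⟩
        set me := Nat.find hex with hmedef
        have hme1 : k1 ≤ me := (Nat.find_spec hex).1
        have hme2 : ξ me ∉ O := (Nat.find_spec hex).2
        have hbefO : ∀ m, k1 ≤ m → m < me → ξ m ∈ O := by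
          intro m h1 h2
          by_contra h3
          exact absurd (Nat.find_min' hex ⟨h1, h3⟩) (by omega)
        have hsttail : ∀ m, k1 + 1 ≤ m → m ≤ me → mst ξ m = Sum.inr (Sum.inl (A.owner (ξ (m - 1)))) := by
          intro m hm hm'
          induction m with
          | zero => omega
          | succ m ih =>
              rcases Nat.lt_or_ge m (k1 + 1) with h2 | h2
              · have hm1 : m = k1 := by omega
                rw [hmstS, hm1, hstk1, hupdef]
                simp only [mUp]
                rw [if_pos (hbefO k1 le_rfl (by omega))]
                rw [← hm1]
                simp only [Nat.add_sub_cancel]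
              · rw [hmstS, ih h2 (by omega), hupdef]
                simp only [mUp]
                rw [if_pos (hbefO m (by omega) (by omega))]
                simp only [Nat.add_sub_cancel]
        have hstform : ∀ m, k1 ≤ m → m ≤ me → ∃ j, mst ξ m = Sum.inr (Sum.inl j) := by
          intro m h1 h2
          rcases Nat.eq_or_lt_of_le h1 with he | hlt
          · exact ⟨i, he ▸ hstk1⟩
          · exact ⟨_, hsttail m (by omega) h2⟩
        have hprevown : k1 < me → A.owner (ξ (me - 1)) = i := by
          intro hlt
          by_contra hno
          have h1 := hmove (me - 1) hno
          obtain ⟨j, hj⟩ := hstform (me - 1) (by omega) (by omega)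
          rw [hj, hnxtdef] at h1
          simp only [mNxt] at h1
          rw [if_pos (hbefO (me - 1) (by omega) (by omega))] at h1
          rw [show me - 1 + 1 = me by omega] at h1
          exact hme2 (h1 ▸ (hfO _ (hbefO (me - 1) (by omega) (by omega))).1)
        have hstme : mst ξ me = Sum.inr (Sum.inl i) := by
          rcases Nat.eq_or_lt_of_le hme1 with he | hlt
          · exact he ▸ hstk1
          · rw [hsttail me (by omega) le_rfl, hprevown hlt]
        have hDme : ξ me ∈ Dreg A (T i) i := by
          rcases Nat.eq_or_lt_of_le hme1 with he | hlt
          · exact he ▸ hD1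
          · have hpO : ξ (me - 1) ∈ O := hbefO (me - 1) (by omega) (by omega)
            have hpC : ξ (me - 1) ∈ Dreg A (T i) i := hOCi i hiA _ hpO
            have hE : A.E (ξ (me - 1)) (ξ me) := by
              have h1 := hξp (me - 1)
              rwa [show me - 1 + 1 = me by omega] at h1
            exact notCi_succ_i A (T i) i (hprevown hlt) hpC hE
        have hentry : mst ξ (me + 1) = Sum.inr (Sum.inr i) := by
          rw [hmstS, hstme, hupdef]
          simp only [mUp]
          rw [if_neg hme2]
        have habs : ∀ m, me + 1 ≤ m → mst ξ m = Sum.inr (Sum.inr i) := by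
          intro m hm
          induction m with
          | zero => omega
          | succ m ih =>
              rcases Nat.lt_or_ge m (me + 1) with h2 | h2
              · have hm1 : m = me := by omega
                rw [hm1]
                exact hentry
              · rw [hmstS, ih h2, hupdef]
                simp only [mUp]
        have hmoves : ∀ m, me ≤ m → A.owner (ξ m) ≠ i → ξ (m + 1) = gP A (T i) i (ξ m) := by
          intro m hm ho
          rcases Nat.eq_or_lt_of_le hm with he | hlt
          · have hm' : m = me := he.symm
            rw [hm'] at ho ⊢
            rw [hmove me ho, hstme, hnxtdef]
            simp only [mNxt]
            rw [if_neg hme2]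
          · rw [hmove m ho, habs m (by omega), hnxtdef]
            simp only [mNxt]
        exact hpunish me hDme hmoves
  -- assemble
  refine ⟨st, hNE2, ?_, ?_, ?_⟩
  · rw [houtc']
    exact hWsub
  · exact ⟨MacM n K, ⟨init, up, nxt, fun m v => mNxt_valid A T ρ f O K hρp hfO m v⟩,
      inferInstance, fun h v => rfl⟩
  · intro hfin
    refine ⟨MacM n K, ⟨init, up, nxt, fun m v => mNxt_valid A T ρ f O K hρp hfO m v⟩,
      inferInstance, ?_, fun h v => rfl⟩
    have h1 : Nat.card (MacM n K) = K + (n + n) := by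
      simp [MacM, Nat.card_eq_fintype_card]
    have h2 := hbound hfin
    rw [h1]
    omega

end Arena
/-- From any NE in a co-Büchi game one can derive a finite-memory NE
whose outcome satisfies at least the same objectives; with memory size at most
`|V| + 2n` if the arena is finite. -/
theorem cobuchi_fm_ne
    (V : Type) (n : ℕ) (A : Arena V n) (T : Fin n → Set V) (v0 : V)
    (σ' : Fin n → A.Strategy)
    (hNE : A.IsNEObj (fun i => CoBuchiObj (T i)) σ' v0) :
    (∃ σ : Fin n → A.Strategy,
      A.IsNEObj (fun i => CoBuchiObj (T i)) σ v0 ∧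
      satCoBuchi T (outcome A σ' v0) ⊆ satCoBuchi T (outcome A σ v0) ∧
      ∀ i, FiniteMemory (σ i)) ∧
    (Finite V →
      ∃ σ : Fin n → A.Strategy,
        A.IsNEObj (fun i => CoBuchiObj (T i)) σ v0 ∧
        satCoBuchi T (outcome A σ' v0) ⊆ satCoBuchi T (outcome A σ v0) ∧
        ∀ i, HasMemorySize (σ i) (Nat.card V + 2 * n)) := by
  obtain ⟨st, h1, h2, h3, h4⟩ := Arena.main_construction A T v0 σ' hNE
  constructor
  · exact ⟨fun _ => st, h1, h2, fun _ => h3⟩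
  · intro hfin
    exact ⟨fun _ => st, h1, h2, fun _ => h4 hfin⟩
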